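/- Chen's composition formula for iterated integrals: for every k ≥ 1, continuous functions f₁,…,f_k : ℝ → A, and real numbers a ≤ b ≤ c, one has I(f₁,…,f_k; a, c) = Σ_{i=0}^{k} I(f₁,…,f_i; a, b) · I(f_{i+1},…,f_k; b, c). (This underlies the multiplicativity ⟨T_ω, γ∘δ⟩ = ⟨T_ω, γ⟩·⟨T_ω, δ⟩ of the transport of a formal power series connection under composition of 1-paths.) -/

import Mathlib

open MeasureTheory

variable {A : Type*} [NormedRing A] [NormedAlgebra ℝ A] [CompleteSpace A]

/-- The simplex `{t : ℝᵏ | a ≤ t 0 ≤ t 1 ≤ ⋯ ≤ t (k-1) ≤ b}`. -/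
def simplexSet (k : ℕ) (a b : ℝ) : Set (Fin k → ℝ) :=
  {t | Monotone t ∧ ∀ i, t i ∈ Set.Icc a b}

/-- The iterated integral `I(f₁, …, f_k; a, b)` of a list of functions `fs = [f₁, …, f_k]`,
as a Bochner integral of the (noncommutative, ordered) product `f₁ (t₁) ⋯ f_k (t_k)` over
the simplex `a ≤ t₁ ≤ ⋯ ≤ t_k ≤ b` with respect to Lebesgue measure.  For `k = 0` this
is the integral of the empty product `1` over the one-point space `Fin 0 → ℝ` of total
measure `1`, i.e. it equals `1`. -/
noncomputable def iterInt (fs : List (ℝ → A)) (a b : ℝ) : A :=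
  ∫ t in simplexSet fs.length a b, (List.ofFn fun i => fs.get i (t i)).prod

namespace ChenAux

set_option linter.unusedSectionVars false

lemma isClosed_mono (k : ℕ) : IsClosed {t : Fin k → ℝ | Monotone t} := by
  have : {t : Fin k → ℝ | Monotone t} =
      ⋂ (i : Fin k) (j : Fin k) (_ : i ≤ j), {t | t i ≤ t j} := by
    ext t; simp [Monotone]
  rw [this]
  exact isClosed_iInter fun i => isClosed_iInter fun j => isClosed_iInter fun _ =>
    isClosed_le (continuous_apply i) (continuous_apply j)

lemma isClosed_simplexSet (k : ℕ) (a b : ℝ) : IsClosed (simplexSet k a b) := by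
  have h2 : IsClosed {t : Fin k → ℝ | ∀ i, t i ∈ Set.Icc a b} := by
    have : {t : Fin k → ℝ | ∀ i, t i ∈ Set.Icc a b} =
        ⋂ (i : Fin k), (fun t : Fin k → ℝ => t i) ⁻¹' Set.Icc a b := by
      ext t; simp
    rw [this]
    exact isClosed_iInter fun i => isClosed_Icc.preimage (continuous_apply i)
  exact (isClosed_mono k).inter h2

lemma isCompact_simplexSet (k : ℕ) (a b : ℝ) : IsCompact (simplexSet k a b) := by
  refine IsCompact.of_isClosed_subset
    (isCompact_univ_pi fun _ : Fin k => isCompact_Icc (a := a) (b := b))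
    (isClosed_simplexSet k a b) ?_
  intro t ht i _
  exact ht.2 i

lemma continuous_prodFun (fs : List (ℝ → A)) (hfs : ∀ f ∈ fs, Continuous f) :
    Continuous (fun t : Fin fs.length → ℝ => (List.ofFn fun i => fs.get i (t i)).prod) := by
  have : ∀ t : Fin fs.length → ℝ,
      (List.ofFn fun i => fs.get i (t i)).prod =
      ((List.finRange fs.length).map fun i => fs.get i (t i)).prod := by
    intro t; rw [List.ofFn_eq_map]
  simp only [this]
  apply continuous_list_prod
  intro i _
  exact (hfs _ (fs.get_mem i)).comp (continuous_apply i)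

lemma integrableOn_prodFun (fs : List (ℝ → A)) (hfs : ∀ f ∈ fs, Continuous f) (a b : ℝ) :
    IntegrableOn (fun t : Fin fs.length → ℝ => (List.ofFn fun i => fs.get i (t i)).prod)
      (simplexSet fs.length a b) :=
  (continuous_prodFun fs hfs).continuousOn.integrableOn_compact (isCompact_simplexSet _ a b)

lemma key (f : ℝ → A) (fs : List (ℝ → A)) (hf : Continuous f)
    (hfs : ∀ g ∈ fs, Continuous g) {a b : ℝ} (hab : a ≤ b) :
    IntegrableOn (fun s => f s * iterInt fs s b) (Set.Icc a b) ∧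
    iterInt (f :: fs) a b = ∫ s in a..b, f s * iterInt fs s b := by
  set k := fs.length with hk
  set P : (Fin k → ℝ) → A := fun u => (List.ofFn fun i => fs.get i (u i)).prod with hP
  set F : ℝ × (Fin k → ℝ) → A := fun p => f p.1 * P p.2 with hF
  set T : Set (ℝ × (Fin k → ℝ)) := {p | p.1 ∈ Set.Icc a b ∧ p.2 ∈ simplexSet k p.1 b} with hT
  have hTeq : T = ({p : ℝ × (Fin k → ℝ) | a ≤ p.1 ∧ p.1 ≤ b} ∩
      Prod.snd ⁻¹' {u : Fin k → ℝ | Monotone u}) ∩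
      ⋂ i : Fin k, {p : ℝ × (Fin k → ℝ) | p.1 ≤ p.2 i ∧ p.2 i ≤ b} := by
    ext p
    simp only [hT, Set.mem_setOf_eq, Set.mem_Icc, simplexSet, Set.mem_inter_iff,
      Set.mem_preimage, Set.mem_iInter, forall_and]
    tauto
  have hTclosed : IsClosed T := by
    rw [hTeq]
    refine IsClosed.inter (IsClosed.inter ?_ ((isClosed_mono k).preimage continuous_snd))
      (isClosed_iInter fun i => IsClosed.inter ?_ ?_)
    · exact (isClosed_le continuous_const continuous_fst).inter
        (isClosed_le continuous_fst continuous_const)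
    · exact isClosed_le continuous_fst ((continuous_apply i).comp continuous_snd)
    · exact isClosed_le ((continuous_apply i).comp continuous_snd) continuous_const
  have hTmeas : MeasurableSet T := hTclosed.measurableSet
  have hTcompact : IsCompact T := by
    refine IsCompact.of_isClosed_subset
      (isCompact_Icc.prod (isCompact_univ_pi fun _ : Fin k => isCompact_Icc)
        : IsCompact ((Set.Icc a b) ×ˢ Set.pi Set.univ fun _ : Fin k => Set.Icc a b))
      hTclosed ?_
    rintro ⟨s, u⟩ ⟨hs, _, hu⟩
    exact ⟨hs, fun i _ => ⟨hs.1.trans (hu i).1, (hu i).2⟩⟩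
  have hFcont : Continuous F :=
    (hf.comp continuous_fst).mul ((continuous_prodFun fs hfs).comp continuous_snd)
  have hFint : IntegrableOn F T := hFcont.continuousOn.integrableOn_compact hTcompact
  have hIndInt' : Integrable (T.indicator F)
      ((volume : Measure ℝ).prod (volume : Measure (Fin k → ℝ))) := by
    rw [← Measure.volume_eq_prod]
    exact (integrable_indicator_iff hTmeas).2 hFint
  have hslice : ∀ s : ℝ, (∫ u, T.indicator F (s, u)) =
      (Set.Icc a b).indicator (fun s => f s * iterInt fs s b) s := by
    intro s
    by_cases hs : s ∈ Set.Icc a b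
    · have h1 : (fun u => T.indicator F (s, u)) =
          (simplexSet k s b).indicator (fun u => f s * P u) := by
        funext u
        by_cases hu : u ∈ simplexSet k s b
        · rw [Set.indicator_of_mem hu, Set.indicator_of_mem (show (s, u) ∈ T from ⟨hs, hu⟩)]
        · rw [Set.indicator_of_notMem hu,
            Set.indicator_of_notMem (show (s, u) ∉ T from fun hm => hu hm.2)]
      rw [h1, integral_indicator (isClosed_simplexSet k s b).measurableSet,
        Set.indicator_of_mem hs]
      have hPint : IntegrableOn P (simplexSet k s b) := integrableOn_prodFun fs hfs s b
      have := (ContinuousLinearMap.mul ℝ A (f s)).integral_comp_comm hPint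
      simp only [ContinuousLinearMap.mul_apply'] at this
      exact this
    · have h1 : (fun u => T.indicator F (s, u)) = fun _ => (0 : A) := by
        funext u
        exact Set.indicator_of_notMem (fun hm => hs hm.1) F
      rw [h1, integral_zero, Set.indicator_of_notMem hs]
  constructor
  · have hmarg := hIndInt'.integral_prod_left
    simp only [hslice] at hmarg
    exact (integrable_indicator_iff measurableSet_Icc).1 hmarg
  · have heq1 : iterInt (f :: fs) a b = ∫ p in T, F p := by
      have hmp := volume_preserving_piFinSuccAbove (fun _ : Fin (k + 1) => ℝ) 0
      have hemb := (MeasurableEquiv.piFinSuccAbove (fun _ : Fin (k + 1) => ℝ) 0).measurableEmbedding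
      have hpre : (MeasurableEquiv.piFinSuccAbove (fun _ : Fin (k + 1) => ℝ) 0) ⁻¹' T =
          simplexSet (k + 1) a b := by
        ext t
        simp only [Set.mem_preimage, MeasurableEquiv.piFinSuccAbove_apply, hT,
          Set.mem_setOf_eq, Fin.succAbove_zero, simplexSet, Set.mem_Icc]
        constructor
        · rintro ⟨⟨ha0, h0b⟩, hmono, htail⟩
          constructor
          · intro i j hij
            rcases Fin.eq_zero_or_eq_succ i with rfl | ⟨i', rfl⟩
            · rcases Fin.eq_zero_or_eq_succ j with rfl | ⟨j', rfl⟩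
              · exact le_refl _
              · exact (htail j').1
            · rcases Fin.eq_zero_or_eq_succ j with rfl | ⟨j', rfl⟩
              · exact absurd (Fin.le_zero_iff.1 hij) (Fin.succ_ne_zero i')
              · exact hmono (Fin.succ_le_succ_iff.1 hij)
          · intro i
            rcases Fin.eq_zero_or_eq_succ i with rfl | ⟨i', rfl⟩
            · exact ⟨ha0, h0b⟩
            · exact ⟨ha0.trans (htail i').1, (htail i').2⟩
        · rintro ⟨hmono, hIcc⟩
          refine ⟨hIcc 0, fun i j hij => hmono (Fin.succ_le_succ_iff.2 hij), fun i =>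
            ⟨hmono (Fin.zero_le _), (hIcc i.succ).2⟩⟩
      have hint : ∀ t : Fin (k + 1) → ℝ,
          (List.ofFn fun i => (f :: fs).get i (t i)).prod =
          F ((MeasurableEquiv.piFinSuccAbove (fun _ : Fin (k + 1) => ℝ) 0) t) := by
        intro t
        simp [MeasurableEquiv.piFinSuccAbove_apply, hF, hP, Fin.succAbove_zero,
          List.ofFn_succ, Fin.tail]
        rfl
      show (∫ t in simplexSet (k + 1) a b,
          (List.ofFn fun i => (f :: fs).get i (t i)).prod) = ∫ p in T, F p
      rw [← hpre]
      simp only [hint]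
      exact hmp.setIntegral_preimage_emb hemb F T
    rw [heq1, ← integral_indicator hTmeas, Measure.volume_eq_prod,
      integral_prod _ hIndInt']
    simp only [hslice]
    rw [integral_indicator measurableSet_Icc, integral_Icc_eq_integral_Ioc,
      ← intervalIntegral.integral_of_le hab]

lemma iterInt_nil (a b : ℝ) : iterInt ([] : List (ℝ → A)) a b = 1 := by
  have h : simplexSet 0 a b = Set.univ := by
    ext t
    simp only [simplexSet, Set.mem_setOf_eq, Set.mem_univ, iff_true]
    exact ⟨fun i j _ => i.elim0, fun i => i.elim0⟩
  have hμ : (volume : Measure (Fin 0 → ℝ)) Set.univ = 1 := by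
    rw [volume_pi, Measure.pi_univ]
    simp
  rw [iterInt]
  show (∫ t in simplexSet 0 a b, (List.ofFn fun i : Fin 0 => ([] : List (ℝ → A)).get i (t i)).prod) = 1
  rw [h]
  simp [integral_const, Measure.real, hμ]

lemma chen (fs : List (ℝ → A)) :
    ∀ (_ : ∀ f ∈ fs, Continuous f) {a b c : ℝ}, a ≤ b → b ≤ c →
    iterInt fs a c = ∑ i ∈ Finset.range (fs.length + 1),
      iterInt (fs.take i) a b * iterInt (fs.drop i) b c := by
  induction fs with
  | nil =>
    intro hfs a b c hab hbc
    simp [iterInt_nil]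
  | cons f fs IH =>
    intro hfs a b c hab hbc
    have hf : Continuous f := hfs f List.mem_cons_self
    have hfs' : ∀ g ∈ fs, Continuous g := fun g hg => hfs g (List.mem_cons_of_mem f hg)
    have hac : a ≤ c := hab.trans hbc
    have base : IntegrableOn (fun s => f s * iterInt fs s c) (Set.Icc a c) :=
      (key f fs hf hfs' hac).1
    have hInt_ab : IntervalIntegrable (fun s => f s * iterInt fs s c) volume a b := by
      rw [intervalIntegrable_iff, Set.uIoc_of_le hab]
      exact base.mono_set fun x hx => ⟨le_of_lt hx.1, hx.2.trans hbc⟩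
    have hInt_bc : IntervalIntegrable (fun s => f s * iterInt fs s c) volume b c := by
      rw [intervalIntegrable_iff, Set.uIoc_of_le hbc]
      exact base.mono_set fun x hx => ⟨hab.trans (le_of_lt hx.1), hx.2⟩
    have htakeInt : ∀ i : ℕ,
        IntervalIntegrable (fun s => f s * iterInt (fs.take i) s b) volume a b := by
      intro i
      rw [intervalIntegrable_iff, Set.uIoc_of_le hab]
      exact ((key f (fs.take i) hf
        (fun g hg => hfs' g (List.take_subset i fs hg)) hab).1).mono_set
        Set.Ioc_subset_Icc_self
    have hterm : ∀ i ∈ Finset.range (fs.length + 1),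
        (∫ s in a..b, (f s * iterInt (fs.take i) s b) * iterInt (fs.drop i) b c)
        = iterInt ((f :: fs).take (i + 1)) a b * iterInt ((f :: fs).drop (i + 1)) b c := by
      intro i _
      have h2 := ((ContinuousLinearMap.mul ℝ A).flip
        (iterInt (fs.drop i) b c)).intervalIntegral_comp_comm (htakeInt i)
      simp only [ContinuousLinearMap.flip_apply, ContinuousLinearMap.mul_apply'] at h2
      rw [h2, ← (key f (fs.take i) hf
        (fun g hg => hfs' g (List.take_subset i fs hg)) hab).2,
        List.take_succ_cons, List.drop_succ_cons]
    calc iterInt (f :: fs) a c = ∫ s in a..c, f s * iterInt fs s c :=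
          (key f fs hf hfs' hac).2
      _ = (∫ s in a..b, f s * iterInt fs s c) + ∫ s in b..c, f s * iterInt fs s c :=
          (intervalIntegral.integral_add_adjacent_intervals hInt_ab hInt_bc).symm
      _ = (∫ s in a..b, ∑ i ∈ Finset.range (fs.length + 1),
            (f s * iterInt (fs.take i) s b) * iterInt (fs.drop i) b c)
          + iterInt (f :: fs) b c := by
          rw [← (key f fs hf hfs' hbc).2]
          congr 1
          apply intervalIntegral.integral_congr
          intro s hs
          rw [Set.uIcc_of_le hab] at hs
          dsimp only
          rw [IH hfs' hs.2 hbc, Finset.mul_sum]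
          simp only [mul_assoc]
      _ = (∑ i ∈ Finset.range (fs.length + 1),
            iterInt ((f :: fs).take (i + 1)) a b * iterInt ((f :: fs).drop (i + 1)) b c)
          + iterInt (f :: fs) b c := by
          rw [intervalIntegral.integral_finset_sum
            (fun i _ => (htakeInt i).mul_const _)]
          exact congrArg (· + _) (Finset.sum_congr rfl hterm)
      _ = ∑ i ∈ Finset.range ((f :: fs).length + 1),
            iterInt ((f :: fs).take i) a b * iterInt ((f :: fs).drop i) b c := by
          rw [List.length_cons,
            Finset.sum_range_succ' (fun i =>
              iterInt (List.take i (f :: fs)) a b * iterInt (List.drop i (f :: fs)) b c)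
              (fs.length + 1)]
          congr 1
          simp [iterInt_nil]

end ChenAux

/-- Chen's composition formula for iterated integrals:
`I(f₁,…,f_k; a, c) = ∑_{i=0}^{k} I(f₁,…,f_i; a, b) * I(f_{i+1},…,f_k; b, c)`
for continuous `f₁, …, f_k : ℝ → A` (`k ≥ 1`) and reals `a ≤ b ≤ c`. -/
theorem iterInt_comp (fs : List (ℝ → A)) (hfs : ∀ f ∈ fs, Continuous f)
    (hk : 1 ≤ fs.length) {a b c : ℝ} (hab : a ≤ b) (hbc : b ≤ c) :
    iterInt fs a c =
      ∑ i ∈ Finset.range (fs.length + 1),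
        iterInt (fs.take i) a b * iterInt (fs.drop i) b c := by
  exact ChenAux.chen fs hfs hab hbc
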